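/- Let μ > 0, λ ∈ (0,1), and a, a0 ∈ [−1,1] with a0 < 0 and (1−λ)a = λa0. Then the values x̃ = −1, r̂1 = −b², ρ = (1/(−2λμa0))·(1 + √(1 + (2λμa0·b)²)), and ρ1 = ρ/2 satisfy ρ > 0, ρ1 > 0, |(ρ² + 2r̂1)/(2ρρ1)| < 1, and the Configuration-III equilibrium equations (S1) (1−λ)μa + λμa0·(ρ² + 2r̂1)/(2ρρ1) + (1 − x̃)/ρ = 0, (S2) (1−λ)μa·(ρ² + 2r̂1)/(2ρρ1) + 1/ρ1 + λμa0 = 0, and (S3) μ·(2(1−λ)a/ρ + λa0/ρ1)·r̂1 + 2λμa0·b²/ρ1 = 0. -/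

import Mathlib

set_option maxHeartbeats 1600000 in
/-- Configuration III, x̃ = −1 symmetric circling equilibrium
(Proposition 5.3(c)): with a0 < 0 and (1−λ)a = λa0, the displayed values satisfy
positivity, the strict dot-product constraint, and equations (S1)–(S3). -/
theorem stmt18 (μ lam a a0 b xt rh1 ρ ρ1 : ℝ)
    (hμ : μ > 0) (hlam1 : 0 < lam) (hlam2 : lam < 1)
    (ha : a ∈ Set.Icc (-1 : ℝ) 1) (ha0 : a0 ∈ Set.Icc (-1 : ℝ) 1)
    (hb : b > 0)
    (ha0neg : a0 < 0) (heq : (1 - lam) * a = lam * a0)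
    (hxt : xt = -1)
    (hrh1 : rh1 = -b ^ 2)
    (hρ : ρ = (1 / (-(2 * lam * μ * a0))) * (1 + Real.sqrt (1 + (2 * lam * μ * a0 * b) ^ 2)))
    (hρ1 : ρ1 = ρ / 2) :
    ρ > 0 ∧ ρ1 > 0 ∧ |(ρ ^ 2 + 2 * rh1) / (2 * ρ * ρ1)| < 1 ∧
    (1 - lam) * μ * a + lam * μ * a0 * ((ρ ^ 2 + 2 * rh1) / (2 * ρ * ρ1))
      + (1 - xt) / ρ = 0 ∧
    (1 - lam) * μ * a * ((ρ ^ 2 + 2 * rh1) / (2 * ρ * ρ1)) + 1 / ρ1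
      + lam * μ * a0 = 0 ∧
    μ * (2 * (1 - lam) * a / ρ + lam * a0 / ρ1) * rh1
      + 2 * lam * μ * a0 * b ^ 2 / ρ1 = 0 := by
  have hXneg : 2 * lam * μ * a0 < 0 := by
    nlinarith [mul_neg_of_pos_of_neg (by positivity : (0:ℝ) < 2 * lam * μ) ha0neg]
  set c : ℝ := -(2 * lam * μ * a0) with hc
  have hcpos : 0 < c := by rw [hc]; linarith
  set s : ℝ := Real.sqrt (1 + (2 * lam * μ * a0 * b) ^ 2) with hs
  have hs2 : s ^ 2 = 1 + c ^ 2 * b ^ 2 := by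
    rw [hs, Real.sq_sqrt (by positivity)]; rw [hc]; ring
  have hsnn : 0 ≤ s := Real.sqrt_nonneg _
  have hs1 : 1 < s := by nlinarith [mul_pos (mul_pos hcpos hcpos) (mul_pos hb hb)]
  have hcρ : c * ρ = 1 + s := by
    rw [hρ, hc]; field_simp
    exact div_self ha0neg.ne
  have hck : c = -(2 * ((1 - lam) * μ * a)) := by
    rw [hc]; nlinarith [heq]
  clear_value c s
  clear hs hc hρ
  have hρpos : 0 < ρ := by nlinarith
  have hρne : ρ ≠ 0 := hρpos.ne'
  have hkey : c * ρ ^ 2 - 2 * ρ = c * b ^ 2 := by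
    have h1 : c * (c * ρ ^ 2 - 2 * ρ) = c * (c * b ^ 2) := by nlinarith [hs2, hcρ]
    exact mul_left_cancel₀ hcpos.ne' h1
  have hk : lam * μ * a0 = (1 - lam) * μ * a := by nlinarith [heq]
  have hρ1pos : 0 < ρ1 := by rw [hρ1]; linarith
  have hb2lt : b ^ 2 < ρ ^ 2 := by nlinarith
  have hE : (1 - lam) * μ * a * ρ ^ 2 + ρ = (1 - lam) * μ * a * b ^ 2 := by
    linear_combination (-(1:ℝ)/2) * hkey + ((ρ ^ 2 - b ^ 2)/2) * hck
  refine ⟨hρpos, hρ1pos, ?_, ?_, ?_, ?_⟩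
  · rw [abs_lt, hρ1, hrh1]
    have hden : (0:ℝ) < 2 * ρ * (ρ / 2) := by nlinarith
    constructor
    · rw [lt_div_iff₀ hden]; nlinarith
    · rw [div_lt_iff₀ hden]; nlinarith
  · rw [hρ1, hrh1, hxt, hk]
    field_simp
    linear_combination 2 * hE
  · rw [hρ1, hrh1, hk]
    field_simp
    linear_combination 2 * hE
  · rw [hρ1, hrh1]
    field_simp
    linear_combination (-2 * μ * b ^ 2) * heq
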